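/- For every integer k ≥ 2 there is a constant C > 0 such that for all integers q ≥ k and e ≥ 1, every (q,k)-system consisting of e q-cliques has chromatic number at most C · e^{1/k} · q. -/

import Mathlib

/-- `𝒜` is a family of `q`-element vertex sets (`q`-cliques) that pairwise share at most `ℓ`
vertices.  The associated `k`-uniform hypergraph (an `ℓ`-`(q,k)`-system) has as edges all
`k`-element subsets of members of `𝒜`. -/
def IsSystem {V : Type*} [DecidableEq V] (ℓ q : ℕ) (𝒜 : Finset (Finset V)) : Prop :=
  (∀ A ∈ 𝒜, A.card = q) ∧
    ∀ A ∈ 𝒜, ∀ B ∈ 𝒜, A ≠ B → (A ∩ B).card ≤ ℓ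

/-- The `k`-uniform hypergraph whose edges are all `k`-element subsets of members of `𝒜`
admits a proper coloring with `n` colors: no edge is monochromatic. -/
def SysColorable {V : Type*} (k n : ℕ) (𝒜 : Finset (Finset V)) : Prop :=
  ∃ χ : V → Fin n, ∀ A ∈ 𝒜, ∀ S ⊆ A, S.card = k → ∃ u ∈ S, ∃ w ∈ S, χ u ≠ χ w

namespace Stmt2Aux
set_option maxHeartbeats 1000000


noncomputable def gam (k : ℕ) : ℝ := ((k : ℝ) - 1)⁻¹

noncomputable def Bc (k M σ : ℕ) : ℝ :=
  (k : ℝ) * (3 * (M : ℝ) ^ gam k + (2 * (σ : ℝ)) ^ (1 + gam k) + 2 * (σ : ℝ) ^ gam k)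

noncomputable def Phi (k M σ : ℕ) (s : ℕ) : ℝ :=
  (σ : ℝ) + 1 + Bc k M σ * ((σ : ℝ) ^ (-gam k) - (max (s : ℝ) (σ : ℝ)) ^ (-gam k))

lemma gam_pos {k : ℕ} (hk : 2 ≤ k) : 0 < gam k := by
  have : (1 : ℝ) ≤ (k : ℝ) - 1 := by
    have : (2 : ℝ) ≤ (k : ℝ) := by exact_mod_cast hk
    linarith
  exact inv_pos.mpr (by linarith)

lemma gam_le_one {k : ℕ} (hk : 2 ≤ k) : gam k ≤ 1 := by
  have h : (1 : ℝ) ≤ (k : ℝ) - 1 := by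
    have : (2 : ℝ) ≤ (k : ℝ) := by exact_mod_cast hk
    linarith
  rw [gam]
  exact inv_le_one_of_one_le₀ h

lemma one_le_k_gam {k : ℕ} (hk : 2 ≤ k) : 1 ≤ (k : ℝ) * gam k := by
  have h1 : (0 : ℝ) < (k : ℝ) - 1 := by
    have : (2 : ℝ) ≤ (k : ℝ) := by exact_mod_cast hk
    linarith
  rw [gam, ← div_eq_mul_inv, le_div_iff₀ h1]
  linarith

lemma rpow_neg_antitone {x y γ : ℝ} (hx : 0 < x) (hxy : x ≤ y) (hγ : 0 ≤ γ) :
    y ^ (-γ) ≤ x ^ (-γ) := by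
  rw [Real.rpow_neg hx.le, Real.rpow_neg (hx.trans_le hxy).le]
  exact inv_anti₀ (Real.rpow_pos_of_pos hx γ)
    (Real.rpow_le_rpow hx.le hxy hγ)

lemma tangent {ρ γ : ℝ} (hρ0 : 0 ≤ ρ) (hγ0 : 0 ≤ γ) (hγ1 : γ ≤ 1) :
    ρ ^ γ ≤ γ * ρ + (1 - γ) := by
  have h := Real.geom_mean_le_arith_mean2_weighted (w₁ := γ) (w₂ := 1 - γ) (p₁ := ρ)
    (p₂ := 1) hγ0 (by linarith) hρ0 zero_le_one (by ring)
  rw [Real.one_rpow, mul_one, mul_one] at h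
  linarith

lemma convex_drop {x s γ : ℝ} (hx : 0 < x) (hxs : x ≤ s) (hγ0 : 0 < γ) (hγ1 : γ ≤ 1) :
    γ * ((s - x) / s) * s ^ (-γ) ≤ x ^ (-γ) - s ^ (-γ) := by
  have hs0 : 0 < s := hx.trans_le hxs
  set ρ := x / s with hρ
  have hρ0 : 0 < ρ := div_pos hx hs0
  have hρ1 : ρ ≤ 1 := (div_le_one hs0).mpr hxs
  have t1 : ρ ^ γ ≤ 1 - γ * (1 - ρ) := by
    have := tangent hρ0.le hγ0.le hγ1
    linarith
  have hργpos : 0 < ρ ^ γ := Real.rpow_pos_of_pos hρ0 γ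
  have t2 : 1 + γ * (1 - ρ) ≤ (ρ ^ γ)⁻¹ := by
    have hinv : ρ ^ γ * (ρ ^ γ)⁻¹ = 1 := mul_inv_cancel₀ (ne_of_gt hργpos)
    have ha0 : 0 ≤ γ * (1 - ρ) := by nlinarith
    have ha : γ * (1 - ρ) < 1 := by nlinarith
    have h5 : 1 ≤ (1 - γ * (1 - ρ)) * (ρ ^ γ)⁻¹ := by
      have := mul_le_mul_of_nonneg_right t1 (inv_nonneg.mpr hργpos.le)
      linarith [hinv ▸ this]
    nlinarith [h5, ha, ha0]
  have hx_eq : x = ρ * s := by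
    rw [hρ, div_mul_cancel₀ _ hs0.ne']
  have hsplit : x ^ (-γ) = ρ ^ (-γ) * s ^ (-γ) := by
    rw [hx_eq, Real.mul_rpow hρ0.le hs0.le]
  have hρneg : ρ ^ (-γ) = (ρ ^ γ)⁻¹ := Real.rpow_neg hρ0.le γ
  have hsγpos : 0 < s ^ (-γ) := Real.rpow_pos_of_pos hs0 _
  have hkey : x ^ (-γ) - s ^ (-γ) = ((ρ ^ γ)⁻¹ - 1) * s ^ (-γ) := by
    rw [hsplit, hρneg]; ring
  rw [hkey]
  have h4 : (s - x) / s = 1 - ρ := by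
    rw [hρ, sub_div, div_self hs0.ne']
  rw [h4]
  exact mul_le_mul_of_nonneg_right (by linarith) hsγpos.le

namespace Kernel

lemma km1_gam {k : ℕ} (hk : 2 ≤ k) : ((k : ℝ) - 1) * gam k = 1 := by
  have h : (k : ℝ) - 1 ≠ 0 := by
    have : (2 : ℝ) ≤ (k : ℝ) := by exact_mod_cast hk
    intro h; nlinarith
  rw [gam, mul_inv_cancel₀ h]

lemma k_gam {k : ℕ} (hk : 2 ≤ k) : (k : ℝ) * gam k = 1 + gam k := by
  have := km1_gam hk
  nlinarith [this]

lemma cast_km1 {k : ℕ} (hk : 2 ≤ k) : ((k - 1 : ℕ) : ℝ) = (k : ℝ) - 1 := by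
  have : 1 ≤ k := by omega
  push_cast [this]
  ring

lemma B_nonneg (k M σ : ℕ) : 0 ≤ Bc k M σ := by
  unfold Bc
  positivity

/-- Key potential step. -/
lemma kernel {k M σ s d r : ℕ} (hk : 2 ≤ k) (hσ : 2 * k ≤ σ)
    (hs : σ < s) (hsM : s ≤ M) (hd1 : 1 ≤ d) (hds : d ≤ s)
    (h2d : r ≤ 2 * d) (hr2 : 2 ≤ r) (hrmax : s ^ k < M * (r + 1) ^ (k - 1)) :
    1 + Phi k M σ (s - d) ≤ Phi k M σ s := by
  have hγ0 : 0 < gam k := gam_pos hk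
  have hγ1 : gam k ≤ 1 := gam_le_one hk
  set γ := gam k with hγdef
  have hσ0 : (0 : ℝ) < σ := by
    have : 0 < σ := by omega
    exact_mod_cast this
  have hs0 : (0 : ℝ) < s := by
    have : 0 < s := by omega
    exact_mod_cast this
  have hσs : (σ : ℝ) ≤ (s : ℝ) := by exact_mod_cast hs.le
  have hmax_s : max (s : ℝ) (σ : ℝ) = (s : ℝ) := max_eq_left hσs
  have hcast : ((s - d : ℕ) : ℝ) = (s : ℝ) - (d : ℝ) := by
    push_cast [hds]; ring
  set x : ℝ := max ((s : ℝ) - (d : ℝ)) (σ : ℝ) with hxdef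
  have hx0 : 0 < x := lt_of_lt_of_le hσ0 (le_max_right _ _)
  have hxs : x ≤ (s : ℝ) := by
    apply max_le _ hσs
    have : (0 : ℝ) ≤ (d : ℝ) := by positivity
    linarith
  set B := Bc k M σ with hBdef
  have hB0 : 0 ≤ B := B_nonneg k M σ
  have hMR0 : (0 : ℝ) ≤ (M : ℝ) := by positivity
  have hMγ0 : (0 : ℝ) ≤ (M : ℝ) ^ γ := Real.rpow_nonneg hMR0 γ
  have h2σ0 : (0 : ℝ) < 2 * (σ : ℝ) := by linarith
  have hT2 : (0 : ℝ) ≤ (2 * (σ : ℝ)) ^ (1 + γ) := Real.rpow_nonneg h2σ0.le _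
  have hT3 : (0 : ℝ) ≤ (σ : ℝ) ^ γ := Real.rpow_nonneg hσ0.le _
  have hkR : (2 : ℝ) ≤ (k : ℝ) := by exact_mod_cast hk
  have hB1 : 3 * (k : ℝ) * (M : ℝ) ^ γ ≤ B := by
    rw [hBdef, Bc, ← hγdef]; nlinarith
  have hB2 : (k : ℝ) * (2 * (σ : ℝ)) ^ (1 + γ) ≤ B := by
    rw [hBdef, Bc, ← hγdef]; nlinarith
  have hB3 : 2 * (k : ℝ) * (σ : ℝ) ^ γ ≤ B := by
    rw [hBdef, Bc, ← hγdef]; nlinarith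
  have hkγ : 1 ≤ (k : ℝ) * γ := one_le_k_gam hk
  -- the key inequality
  have key : 1 ≤ B * (x ^ (-γ) - (s : ℝ) ^ (-γ)) := by
    by_cases hcase : σ + d ≤ s
    · -- Case I : x = s - d
      have hxeq : x = (s : ℝ) - (d : ℝ) := by
        apply max_eq_left
        have : (σ : ℝ) + (d : ℝ) ≤ (s : ℝ) := by exact_mod_cast hcase
        linarith
      have cve := convex_drop (x := x) (s := (s : ℝ)) hx0 hxs hγ0 hγ1
      have hsx : (s : ℝ) - x = (d : ℝ) := by rw [hxeq]; ring
      rw [hsx] at cve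
      -- a = s * s^γ ≤ M^γ * (r+1)
      set a : ℝ := (s : ℝ) * (s : ℝ) ^ γ with hadef
      have ha0 : 0 < a := by
        have := Real.rpow_pos_of_pos hs0 γ
        positivity
      have hrp : a ≤ (M : ℝ) ^ γ * ((r : ℝ) + 1) := by
        have hcastpow : ((s : ℝ)) ^ (k : ℕ) ≤ (M : ℝ) * ((r : ℝ) + 1) ^ ((k - 1 : ℕ)) := by
          exact_mod_cast hrmax.le
        have hstep := Real.rpow_le_rpow (by positivity) hcastpow hγ0.le
        have hL : (((s : ℝ)) ^ (k : ℕ)) ^ γ = a := by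
          rw [← Real.rpow_natCast (s : ℝ) k, ← Real.rpow_mul hs0.le, k_gam hk, ← hγdef,
            Real.rpow_add hs0, Real.rpow_one]
        have hR : ((M : ℝ) * ((r : ℝ) + 1) ^ ((k - 1 : ℕ))) ^ γ
            = (M : ℝ) ^ γ * ((r : ℝ) + 1) := by
          have hr0 : (0 : ℝ) ≤ (r : ℝ) + 1 := by positivity
          rw [Real.mul_rpow hMR0 (by positivity), ← Real.rpow_natCast ((r : ℝ) + 1) (k - 1),
            ← Real.rpow_mul hr0, cast_km1 hk, km1_gam hk, Real.rpow_one]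
        rw [hL, hR] at hstep
        exact hstep
      have h3d : (r : ℝ) + 1 ≤ 3 * (d : ℝ) := by
        have : r + 1 ≤ 3 * d := by omega
        exact_mod_cast this
      have hchain : a ≤ B * γ * (d : ℝ) := by
        calc a ≤ (M : ℝ) ^ γ * ((r : ℝ) + 1) := hrp
          _ ≤ (M : ℝ) ^ γ * (3 * (d : ℝ)) := by
              apply mul_le_mul_of_nonneg_left h3d hMγ0
          _ = 3 * (M : ℝ) ^ γ * (d : ℝ) := by ring
          _ ≤ ((k : ℝ) * γ) * (3 * (M : ℝ) ^ γ * (d : ℝ)) := by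
              apply le_mul_of_one_le_left (by positivity) hkγ
          _ = (3 * (k : ℝ) * (M : ℝ) ^ γ) * (γ * (d : ℝ)) := by ring
          _ ≤ B * (γ * (d : ℝ)) := by
              apply mul_le_mul_of_nonneg_right hB1 (by positivity)
          _ = B * γ * (d : ℝ) := by ring
      have heq : γ * ((d : ℝ) / (s : ℝ)) * (s : ℝ) ^ (-γ) = γ * (d : ℝ) / a := by
        rw [Real.rpow_neg hs0.le, hadef]
        have hne : (s : ℝ) ≠ 0 := hs0.ne'
        have hne2 : (s : ℝ) ^ γ ≠ 0 := (Real.rpow_pos_of_pos hs0 γ).ne'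
        field_simp
      calc (1 : ℝ) ≤ (B * γ * (d : ℝ)) / a := (one_le_div ha0).mpr hchain
        _ = B * (γ * (d : ℝ) / a) := by ring
        _ = B * (γ * ((d : ℝ) / (s : ℝ)) * (s : ℝ) ^ (-γ)) := by rw [heq]
        _ ≤ B * (x ^ (-γ) - (s : ℝ) ^ (-γ)) := by
            apply mul_le_mul_of_nonneg_left cve hB0
    · -- Case II : x = σ
      have hxeq : x = (σ : ℝ) := by
        apply max_eq_right
        have hlt : s < σ + d := by omega
        have : (s : ℝ) < (σ : ℝ) + (d : ℝ) := by exact_mod_cast hlt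
        linarith
      rw [hxeq]
      by_cases hcase2 : (s : ℝ) ≤ 2 * (σ : ℝ)
      · -- IIa
        have cve := convex_drop (x := (σ : ℝ)) (s := (s : ℝ)) hσ0 hσs hγ0 hγ1
        set a : ℝ := (s : ℝ) * (s : ℝ) ^ γ with hadef
        have ha0 : 0 < a := by
          have := Real.rpow_pos_of_pos hs0 γ
          positivity
        have hab : a ≤ (2 * (σ : ℝ)) ^ (1 + γ) := by
          have h1 : (s : ℝ) ^ γ ≤ (2 * (σ : ℝ)) ^ γ :=
            Real.rpow_le_rpow hs0.le hcase2 hγ0.le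
          have h2 : a ≤ (2 * (σ : ℝ)) * (2 * (σ : ℝ)) ^ γ := by
            rw [hadef]
            apply mul_le_mul hcase2 h1 (Real.rpow_nonneg hs0.le γ) h2σ0.le
          rw [Real.rpow_add h2σ0, Real.rpow_one]
          exact h2
        have hsub1 : (1 : ℝ) ≤ (s : ℝ) - (σ : ℝ) := by
          have : σ + 1 ≤ s := hs
          have : (σ : ℝ) + 1 ≤ (s : ℝ) := by exact_mod_cast this
          linarith
        have hchain : a ≤ B * γ * ((s : ℝ) - (σ : ℝ)) := by
          calc a ≤ (2 * (σ : ℝ)) ^ (1 + γ) := hab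
            _ ≤ ((k : ℝ) * γ) * (2 * (σ : ℝ)) ^ (1 + γ) :=
                le_mul_of_one_le_left hT2 hkγ
            _ = ((k : ℝ) * (2 * (σ : ℝ)) ^ (1 + γ)) * γ := by ring
            _ ≤ B * γ := mul_le_mul_of_nonneg_right hB2 hγ0.le
            _ = B * γ * 1 := by ring
            _ ≤ B * γ * ((s : ℝ) - (σ : ℝ)) := by
                apply mul_le_mul_of_nonneg_left hsub1 (by positivity)
        have heq : γ * (((s : ℝ) - (σ : ℝ)) / (s : ℝ)) * (s : ℝ) ^ (-γ)
            = γ * ((s : ℝ) - (σ : ℝ)) / a := by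
          rw [Real.rpow_neg hs0.le, hadef]
          have hne : (s : ℝ) ≠ 0 := hs0.ne'
          have hne2 : (s : ℝ) ^ γ ≠ 0 := (Real.rpow_pos_of_pos hs0 γ).ne'
          field_simp
        calc (1 : ℝ) ≤ (B * γ * ((s : ℝ) - (σ : ℝ))) / a := (one_le_div ha0).mpr hchain
          _ = B * (γ * (((s : ℝ) - (σ : ℝ))) / a) := by ring
          _ = B * (γ * (((s : ℝ) - (σ : ℝ)) / (s : ℝ)) * (s : ℝ) ^ (-γ)) := by
              rw [heq]
          _ ≤ B * ((σ : ℝ) ^ (-γ) - (s : ℝ) ^ (-γ)) := by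
              apply mul_le_mul_of_nonneg_left cve hB0
      · -- IIb : 2σ < s
        push_neg at hcase2
        have h1 : (s : ℝ) ^ (-γ) ≤ (2 * (σ : ℝ)) ^ (-γ) :=
          rpow_neg_antitone h2σ0 hcase2.le hγ0.le
        have h2 : (2 * (σ : ℝ)) ^ (-γ) = (2 : ℝ) ^ (-γ) * (σ : ℝ) ^ (-γ) :=
          Real.mul_rpow (by norm_num) hσ0.le
        have h3 : (2 : ℝ) ^ (-γ) ≤ 1 - γ / 2 := by
          have ht := tangent (ρ := 1/2) (γ := γ) (by norm_num) hγ0.le hγ1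
          have h2γ : (2 : ℝ) ^ (-γ) = ((1 : ℝ)/2) ^ γ := by
            rw [Real.rpow_neg (by norm_num : (0:ℝ) ≤ 2)]
            rw [one_div, Real.inv_rpow (by norm_num : (0:ℝ) ≤ 2)]
          rw [h2γ]
          linarith
        have hσγpos : 0 < (σ : ℝ) ^ (-γ) := Real.rpow_pos_of_pos hσ0 _
        have hdrop : γ / 2 * (σ : ℝ) ^ (-γ) ≤ (σ : ℝ) ^ (-γ) - (s : ℝ) ^ (-γ) := by
          have : (s : ℝ) ^ (-γ) ≤ (1 - γ / 2) * (σ : ℝ) ^ (-γ) := by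
            rw [h2] at h1
            apply h1.trans
            apply mul_le_mul_of_nonneg_right h3 hσγpos.le
          nlinarith
        have hprod : (σ : ℝ) ^ γ * (σ : ℝ) ^ (-γ) = 1 := by
          rw [← Real.rpow_add hσ0, add_neg_cancel, Real.rpow_zero]
        calc (1 : ℝ) ≤ (k : ℝ) * γ := hkγ
          _ = ((k : ℝ) * γ) * ((σ : ℝ) ^ γ * (σ : ℝ) ^ (-γ)) := by
              rw [hprod, mul_one]
          _ = (2 * (k : ℝ) * (σ : ℝ) ^ γ) * (γ / 2 * (σ : ℝ) ^ (-γ)) := by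
              ring
          _ ≤ B * (γ / 2 * (σ : ℝ) ^ (-γ)) := by
              apply mul_le_mul_of_nonneg_right hB3 (by positivity)
          _ ≤ B * ((σ : ℝ) ^ (-γ) - (s : ℝ) ^ (-γ)) := by
              apply mul_le_mul_of_nonneg_left hdrop hB0
  -- conclude
  unfold Phi
  rw [← hγdef, ← hBdef, hmax_s, hcast, ← hxdef]
  have expand : B * ((σ:ℝ) ^ (-γ) - (s:ℝ) ^ (-γ)) - B * ((σ:ℝ) ^ (-γ) - x ^ (-γ))
      = B * (x ^ (-γ) - (s:ℝ) ^ (-γ)) := by ring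
  linarith [key, expand]

end Kernel



variable {V : Type} [DecidableEq V]

/-- A set is light if it meets every clique in at most `k-1` vertices. -/
def Light (k : ℕ) (𝒜 : Finset (Finset V)) (X : Finset V) : Prop :=
  ∀ A ∈ 𝒜, (A ∩ X).card ≤ k - 1

/-- Number of "edges" (k-subsets of cliques) inside `T`. -/
def W (k : ℕ) (𝒜 : Finset (Finset V)) (T : Finset V) : ℕ :=
  ∑ A ∈ 𝒜, ((A ∩ T).card).choose k

lemma W_erase_lt (k : ℕ) (hk : 2 ≤ k) (𝒜 : Finset (Finset V)) (T : Finset V)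
    {A : Finset V} (hA : A ∈ 𝒜) (hAT : k ≤ (A ∩ T).card) {v : V} (hv : v ∈ A ∩ T) :
    W k 𝒜 (T.erase v) + 1 ≤ W k 𝒜 T := by
  have key : ∀ B : Finset V, B ∩ T.erase v = (B ∩ T).erase v := by
    intro B; ext x; simp [Finset.mem_erase, Finset.mem_inter]; tauto
  have hmono : ∀ B ∈ 𝒜.erase A, ((B ∩ T.erase v).card).choose k ≤ ((B ∩ T).card).choose k := by
    intro B _
    exact Nat.choose_le_choose k (Finset.card_le_card (by rw [key]; exact Finset.erase_subset _ _))
  have hAcard : (A ∩ T.erase v).card + 1 = (A ∩ T).card := by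
    rw [key, Finset.card_erase_of_mem hv]
    omega
  have hAstrict : ((A ∩ T.erase v).card).choose k + 1 ≤ ((A ∩ T).card).choose k := by
    set a := (A ∩ T.erase v).card with ha
    rw [← hAcard]
    obtain ⟨j, rfl⟩ : ∃ j, k = j + 1 := ⟨k - 1, by omega⟩
    rw [Nat.choose_succ_succ a j]
    have : 1 ≤ a.choose j := Nat.choose_pos (by omega)
    simp only [Nat.succ_eq_add_one] at *
    omega
  unfold W
  rw [← Finset.add_sum_erase _ _ hA, ← Finset.add_sum_erase _ _ hA]
  have := Finset.sum_le_sum hmono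
  omega

/-- Deletion: every `T` contains a light set of size at least `|T| - W(T)`. -/
lemma exists_light (k : ℕ) (hk : 2 ≤ k) (𝒜 : Finset (Finset V)) :
    ∀ (n : ℕ) (T : Finset V), T.card ≤ n →
      ∃ X ⊆ T, Light k 𝒜 X ∧ T.card ≤ X.card + W k 𝒜 T := by
  intro n
  induction n with
  | zero =>
    intro T hT
    exact ⟨T, Finset.Subset.refl _, fun A _ => by
      have : T = ∅ := Finset.card_eq_zero.mp (Nat.le_zero.mp hT)
      simp [this], by omega⟩
  | succ n ih =>
    intro T hT
    by_cases hl : Light k 𝒜 T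
    · exact ⟨T, Finset.Subset.refl _, hl, by omega⟩
    · simp only [Light, not_forall] at hl
      obtain ⟨A, hA, hcard⟩ := hl
      have hge : k ≤ (A ∩ T).card := by omega
      have hne : (A ∩ T).Nonempty := Finset.card_pos.mp (by omega)
      obtain ⟨v, hv⟩ := hne
      have hvT : v ∈ T := (Finset.mem_inter.mp hv).2
      have hcard' : (T.erase v).card ≤ n := by
        rw [Finset.card_erase_of_mem hvT]; omega
      obtain ⟨X, hXsub, hXlight, hXcard⟩ := ih (T.erase v) hcard'
      refine ⟨X, hXsub.trans (Finset.erase_subset _ _), hXlight, ?_⟩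
      have := W_erase_lt k hk 𝒜 T hA hge hv
      rw [Finset.card_erase_of_mem hvT] at hXcard
      omega




lemma card_filter_subset_powersetCard (S K : Finset V) (r : ℕ) (hK : K ⊆ S) (hkr : K.card ≤ r) :
    ((S.powersetCard r).filter (fun T => K ⊆ T)).card
      = (S.card - K.card).choose (r - K.card) := by
  have hcard : (S \ K).card = S.card - K.card := Finset.card_sdiff_of_subset hK
  rw [← hcard, ← Finset.card_powersetCard]
  apply Finset.card_bij' (fun T _ => T \ K) (fun T' _ => T' ∪ K)
  · intro T hT
    rw [Finset.mem_filter, Finset.mem_powersetCard] at hT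
    rw [Finset.mem_powersetCard]
    exact ⟨Finset.sdiff_subset_sdiff hT.1.1 (Finset.Subset.refl _),
      by rw [Finset.card_sdiff_of_subset hT.2, hT.1.2]⟩
  · intro T' hT'
    rw [Finset.mem_powersetCard] at hT'
    have hdisj : Disjoint T' K := Finset.disjoint_of_subset_left hT'.1 (Finset.sdiff_disjoint)
    rw [Finset.mem_filter, Finset.mem_powersetCard]
    refine ⟨⟨Finset.union_subset (hT'.1.trans (Finset.sdiff_subset)) hK, ?_⟩,
      Finset.subset_union_right⟩
    rw [Finset.card_union_of_disjoint hdisj, hT'.2]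
    omega
  · intro T hT
    rw [Finset.mem_filter] at hT
    exact Finset.sdiff_union_of_subset hT.2
  · intro T' hT'
    rw [Finset.mem_powersetCard] at hT'
    have hdisj : Disjoint T' K := Finset.disjoint_of_subset_left hT'.1 (Finset.sdiff_disjoint)
    ext x
    simp only [Finset.mem_sdiff, Finset.mem_union]
    constructor
    · rintro ⟨h1 | h2, hx⟩
      · exact h1
      · exact absurd h2 hx
    · intro hx
      exact ⟨Or.inl hx, Finset.disjoint_left.mp hdisj hx⟩

lemma sum_powersetCard_choose (S A : Finset V) (r k : ℕ) (hk : k ≤ r) (hr : r ≤ S.card) :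
    ∑ T ∈ S.powersetCard r, ((A ∩ T).card).choose k
      = ((A ∩ S).card).choose k * (S.card - k).choose (r - k) := by
  have step1 : ∀ T ∈ S.powersetCard r,
      ((A ∩ T).card).choose k = (((A ∩ S).powersetCard k).filter (fun K => K ⊆ T)).card := by
    intro T hT
    rw [Finset.mem_powersetCard] at hT
    rw [← Finset.card_powersetCard k (A ∩ T)]
    congr 1
    ext K
    simp only [Finset.mem_powersetCard, Finset.mem_filter, Finset.subset_inter_iff]
    constructor
    · rintro ⟨⟨hKA, hKT⟩, hcard⟩
      exact ⟨⟨⟨hKA, hKT.trans hT.1⟩, hcard⟩, hKT⟩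
    · rintro ⟨⟨⟨hKA, _⟩, hcard⟩, hKT⟩
      exact ⟨⟨hKA, hKT⟩, hcard⟩
  rw [Finset.sum_congr rfl step1]
  have swap : ∑ T ∈ S.powersetCard r, (((A ∩ S).powersetCard k).filter (fun K => K ⊆ T)).card
      = ∑ K ∈ (A ∩ S).powersetCard k, ((S.powersetCard r).filter (fun T => K ⊆ T)).card := by
    simp only [Finset.card_filter]
    rw [Finset.sum_comm]
  rw [swap]
  have step2 : ∀ K ∈ (A ∩ S).powersetCard k,
      ((S.powersetCard r).filter (fun T => K ⊆ T)).card = (S.card - k).choose (r - k) := by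
    intro K hK
    rw [Finset.mem_powersetCard] at hK
    rw [card_filter_subset_powersetCard S K r (hK.1.trans Finset.inter_subset_right)
      (le_of_eq_of_le hK.2 hk), hK.2]
  rw [Finset.sum_congr rfl step2, Finset.sum_const, Finset.card_powersetCard, smul_eq_mul]

lemma choose_identity (s r k : ℕ) (hk : k ≤ r) (hr : r ≤ s) :
    s.choose r * r.choose k = s.choose k * (s - k).choose (r - k) := by
  have key := sum_powersetCard_choose (V := ℕ) (Finset.range s) (Finset.range s) r k hk
    (by simp [hr])
  have h2 : ∀ T ∈ (Finset.range s).powersetCard r,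
      (((Finset.range s) ∩ T).card).choose k = r.choose k := by
    intro T hT
    rw [Finset.mem_powersetCard] at hT
    rw [Finset.inter_eq_right.mpr hT.1, hT.2]
  rw [Finset.sum_congr rfl h2, Finset.sum_const, Finset.card_powersetCard, smul_eq_mul,
    Finset.card_range, Finset.inter_self, Finset.card_range] at key
  exact key

lemma factorial_pow_le (k s : ℕ) (hks : k ≤ s) :
    k.factorial * s ^ k ≤ k ^ k * s.descFactorial k := by
  have hre : (∏ i ∈ Finset.range k, (k - i)) = k.factorial := by
    rw [← Finset.prod_range_reflect]
    rw [← Finset.prod_range_add_one_eq_factorial]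
    apply Finset.prod_congr rfl
    intro i hi; rw [Finset.mem_range] at hi; omega
  have l1 : k.factorial * s ^ k = ∏ i ∈ Finset.range k, ((k - i) * s) := by
    rw [Finset.prod_mul_distrib, hre, Finset.prod_const, Finset.card_range]
  have r1 : k ^ k * s.descFactorial k = ∏ i ∈ Finset.range k, (k * (s - i)) := by
    rw [Finset.prod_mul_distrib, Finset.prod_const, Finset.card_range,
      Nat.descFactorial_eq_prod_range]
  rw [l1, r1]
  apply Finset.prod_le_prod'
  intro i hi
  rw [Finset.mem_range] at hi
  have h1 : (k - i) * s = k * s - i * s := by rw [Nat.sub_mul]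
  have h2 : k * (s - i) = k * s - k * i := by rw [Nat.mul_sub]
  have h3 : k * i ≤ i * s := by
    rw [mul_comm]
    exact Nat.mul_le_mul_left i hks
  omega

lemma exists_good_T (k q : ℕ) (hk : 2 ≤ k) (𝒜 : Finset (Finset V))
    (hq : ∀ A ∈ 𝒜, A.card = q)
    (S : Finset V) (r : ℕ) (hkr : k ≤ r) (hrs : r ≤ S.card)
    (hM : 2 * k ^ k * 𝒜.card * q ^ k * r ^ (k - 1) ≤ S.card ^ k) :
    ∃ T ∈ S.powersetCard r, 2 * W k 𝒜 T ≤ r := by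
  classical
  set e := 𝒜.card with he
  set s := S.card with hs
  have hks : k ≤ s := hkr.trans hrs
  set qc := q.choose k with hqc
  set Kf := k.factorial with hKf
  have hKf1 : 1 ≤ Kf := Nat.factorial_pos k
  have a1 : Kf * qc ≤ q ^ k := by
    rw [hKf, hqc, ← Nat.descFactorial_eq_factorial_mul_choose]
    exact Nat.descFactorial_le_pow q k
  have a2 : Kf * r.choose k ≤ r ^ k := by
    rw [hKf, ← Nat.descFactorial_eq_factorial_mul_choose]
    exact Nat.descFactorial_le_pow r k
  have a3 : Kf * s ^ k ≤ k ^ k * (Kf * s.choose k) := by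
    rw [hKf, ← Nat.descFactorial_eq_factorial_mul_choose]
    exact factorial_pow_le k s hks
  have claim1 : 2 * e * qc * r.choose k ≤ r * s.choose k := by
    have h2 : 2 * e * ((Kf * qc) * (Kf * r.choose k)) ≤ 2 * e * (q ^ k * r ^ k) :=
      Nat.mul_le_mul_left _ (Nat.mul_le_mul a1 a2)
    have h3 : k ^ k * (2 * e * (q ^ k * r ^ k)) = (2 * k ^ k * e * q ^ k * r ^ (k - 1)) * r := by
      obtain ⟨j, rfl⟩ : ∃ j, k = j + 1 := ⟨k - 1, by omega⟩
      simp only [Nat.add_sub_cancel]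
      ring
    have h4 : k ^ k * (2 * e * (q ^ k * r ^ k)) ≤ s ^ k * r := by
      rw [h3]; exact Nat.mul_le_mul_right r hM
    have h5 : Kf * (s ^ k * r) ≤ (k ^ k * (Kf * s.choose k)) * r := by
      rw [← mul_assoc]
      exact Nat.mul_le_mul_right r a3
    have big : (Kf * Kf * Kf * k ^ k) * (2 * e * qc * r.choose k)
        ≤ (Kf * Kf * Kf * k ^ k) * (r * s.choose k) := by
      calc (Kf * Kf * Kf * k ^ k) * (2 * e * qc * r.choose k)
          = (Kf * k ^ k) * (2 * e * ((Kf * qc) * (Kf * r.choose k))) := by ring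
        _ ≤ (Kf * k ^ k) * (2 * e * (q ^ k * r ^ k)) := Nat.mul_le_mul_left _ h2
        _ = Kf * (k ^ k * (2 * e * (q ^ k * r ^ k))) := by ring
        _ ≤ Kf * (s ^ k * r) := Nat.mul_le_mul_left _ h4
        _ ≤ (k ^ k * (Kf * s.choose k)) * r := h5
        _ = (Kf * k ^ k) * (r * s.choose k) := by ring
        _ ≤ (Kf * Kf * Kf * k ^ k) * (r * s.choose k) := by
            apply Nat.mul_le_mul_right
            have : Kf ≤ Kf * Kf * Kf := by nlinarith
            exact Nat.mul_le_mul_right _ this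
    exact Nat.le_of_mul_le_mul_left big (by positivity)
  have claim2 : 2 * e * qc * ((s - k).choose (r - k)) ≤ r * s.choose r := by
    have hid := choose_identity s r k hkr hrs
    have hm := Nat.mul_le_mul_right (s.choose r) claim1
    have lhs_eq : 2 * e * qc * r.choose k * s.choose r
        = (s.choose k) * (2 * e * qc * ((s - k).choose (r - k))) := by
      calc 2 * e * qc * r.choose k * s.choose r
          = 2 * e * qc * (s.choose r * r.choose k) := by ring
        _ = 2 * e * qc * (s.choose k * (s - k).choose (r - k)) := by rw [hid]
        _ = (s.choose k) * (2 * e * qc * ((s - k).choose (r - k))) := by ring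
    have rhs_eq : (r * s.choose k) * s.choose r = (s.choose k) * (r * s.choose r) := by ring
    rw [lhs_eq, rhs_eq] at hm
    exact Nat.le_of_mul_le_mul_left hm (Nat.choose_pos hks)
  have hsum : ∑ T ∈ S.powersetCard r, W k 𝒜 T ≤ e * (qc * (s - k).choose (r - k)) := by
    unfold W
    rw [Finset.sum_comm]
    have hper : ∀ A ∈ 𝒜, ∑ T ∈ S.powersetCard r, ((A ∩ T).card).choose k
        ≤ qc * (s - k).choose (r - k) := by
      intro A hA
      rw [sum_powersetCard_choose S A r k hkr hrs]
      apply Nat.mul_le_mul_right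
      exact Nat.choose_le_choose k
        (le_of_le_of_eq (Finset.card_le_card Finset.inter_subset_left) (hq A hA))
    calc ∑ A ∈ 𝒜, ∑ T ∈ S.powersetCard r, ((A ∩ T).card).choose k
        ≤ 𝒜.card • (qc * (s - k).choose (r - k)) := Finset.sum_le_card_nsmul _ _ _ hper
      _ = e * (qc * (s - k).choose (r - k)) := by rw [smul_eq_mul, ← he]
  by_contra hcon
  push_neg at hcon
  have hlt : ∑ _T ∈ S.powersetCard r, r < ∑ T ∈ S.powersetCard r, 2 * W k 𝒜 T := by
    apply Finset.sum_lt_sum_of_nonempty (Finset.powersetCard_nonempty.mpr hrs)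
    intro T hT
    exact hcon T hT
  rw [Finset.sum_const, smul_eq_mul, Finset.card_powersetCard, ← Finset.mul_sum, ← hs] at hlt
  have final : s.choose r * r < s.choose r * r := by
    calc s.choose r * r < 2 * ∑ T ∈ S.powersetCard r, W k 𝒜 T := hlt
      _ ≤ 2 * (e * (qc * (s - k).choose (r - k))) := Nat.mul_le_mul_left _ hsum
      _ = 2 * e * qc * ((s - k).choose (r - k)) := by ring
      _ ≤ r * s.choose r := claim2
      _ = s.choose r * r := by ring
  exact absurd final (lt_irrefl _)

lemma Phi_base {k M σc : ℕ} (s : ℕ) (hsσ : s ≤ σc) : Phi k M σc s = (σc : ℝ) + 1 := by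
  unfold Phi
  have h : max (s : ℝ) (σc : ℝ) = (σc : ℝ) := max_eq_right (by exact_mod_cast hsσ)
  rw [h, sub_self, mul_zero, add_zero]

lemma Phi_ge {k M σc : ℕ} (hk : 2 ≤ k) (hσ : 1 ≤ σc) (s : ℕ) :
    (σc : ℝ) + 1 ≤ Phi k M σc s := by
  unfold Phi
  have hσ0 : (0 : ℝ) < σc := by exact_mod_cast hσ
  have h1 : (max (s : ℝ) (σc : ℝ)) ^ (-gam k) ≤ (σc : ℝ) ^ (-gam k) :=
    rpow_neg_antitone hσ0 (le_max_right _ _) (gam_pos hk).le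
  have h2 := mul_nonneg (Kernel.B_nonneg k M σc) (sub_nonneg.mpr h1)
  linarith

lemma Phi_le {k M σc : ℕ} (hσ : 1 ≤ σc) (s : ℕ) :
    Phi k M σc s ≤ (σc : ℝ) + 1 + Bc k M σc * (σc : ℝ) ^ (-gam k) := by
  unfold Phi
  have hσ0 : (0 : ℝ) ≤ σc := by positivity
  have h0 : (0 : ℝ) ≤ (max (s : ℝ) (σc : ℝ)) ^ (-gam k) :=
    Real.rpow_nonneg (le_trans hσ0 (le_max_right _ _)) _
  have h2 := mul_nonneg (Kernel.B_nonneg k M σc) h0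
  nlinarith [Kernel.B_nonneg k M σc]

lemma cover_base (k M σc : ℕ) (hk : 2 ≤ k) (hσ1 : 1 ≤ σc) (𝒜 : Finset (Finset V))
    (S : Finset V) (hbase : S.card ≤ σc) :
    ∃ (t : ℕ) (f : V → ℕ), (t : ℝ) ≤ Phi k M σc S.card ∧
      (∀ v ∈ S, f v < t) ∧
      (∀ A ∈ 𝒜, ∀ c : ℕ, ((A ∩ S).filter (fun v => f v = c)).card ≤ k - 1) := by
  classical
  refine ⟨S.card, fun v => S.toList.idxOf v, ?_, ?_, ?_⟩
  · have h1 := Phi_ge (M := M) hk hσ1 S.card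
    have h2 : (S.card : ℝ) ≤ (σc : ℝ) := by exact_mod_cast hbase
    linarith
  · intro v hv
    rw [← Finset.length_toList]
    exact List.idxOf_lt_length_iff.mpr (Finset.mem_toList.mpr hv)
  · intro A hA c
    refine le_trans (Finset.card_le_one.mpr ?_) (show (1 : ℕ) ≤ k - 1 by omega)
    intro a ha b hb
    simp only [Finset.mem_filter, Finset.mem_inter] at ha hb
    have ha' : a ∈ S.toList := Finset.mem_toList.mpr ha.1.2
    have hb' : b ∈ S.toList := Finset.mem_toList.mpr hb.1.2
    exact (List.idxOf_inj ha').mp (ha.2.trans hb.2.symm)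

lemma cover (k q M σc : ℕ) (hk : 2 ≤ k) (𝒜 : Finset (Finset V))
    (hcards : ∀ A ∈ 𝒜, A.card = q)
    (hMdef : M = 2 * k ^ k * 𝒜.card * q ^ k)
    (hσk : 2 * k ≤ σc) (hσpow : M * (2 * k) ^ (k - 1) ≤ σc ^ k) :
    ∀ (n : ℕ) (S : Finset V), S.card ≤ n → S.card ≤ M →
      ∃ (t : ℕ) (f : V → ℕ), (t : ℝ) ≤ Phi k M σc S.card ∧
        (∀ v ∈ S, f v < t) ∧
        (∀ A ∈ 𝒜, ∀ c : ℕ, ((A ∩ S).filter (fun v => f v = c)).card ≤ k - 1) := by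
  classical
  have hσ1 : 1 ≤ σc := by omega
  intro n
  induction n with
  | zero =>
    intro S hS0 _
    exact cover_base k M σc hk hσ1 𝒜 S (by omega)
  | succ n ih =>
    intro S hSn hSM
    by_cases hbase : S.card ≤ σc
    · exact cover_base k M σc hk hσ1 𝒜 S hbase
    · push_neg at hbase
      set s := S.card with hs
      -- choose r maximal with M * r^(k-1) ≤ s^k
      have hFrne : ((Finset.range (s + 1)).filter (fun x => M * x ^ (k - 1) ≤ s ^ k)).Nonempty := by
        refine ⟨0, ?_⟩
        rw [Finset.mem_filter, Finset.mem_range]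
        refine ⟨by omega, ?_⟩
        rw [zero_pow (by omega : k - 1 ≠ 0)]
        simp
      set r := ((Finset.range (s + 1)).filter (fun x => M * x ^ (k - 1) ≤ s ^ k)).max' hFrne
        with hr
      have hrmem := Finset.max'_mem _ hFrne
      rw [Finset.mem_filter, Finset.mem_range] at hrmem
      rw [← hr] at hrmem
      have hrs : r ≤ s := by omega
      have hMr : M * r ^ (k - 1) ≤ s ^ k := hrmem.2
      have hr2k : 2 * k ≤ r := by
        rw [hr]
        apply Finset.le_max'
        rw [Finset.mem_filter, Finset.mem_range]
        constructor
        · omega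
        · calc M * (2 * k) ^ (k - 1) ≤ σc ^ k := hσpow
            _ ≤ s ^ k := Nat.pow_le_pow_left (by omega) k
      have hrmax : s ^ k < M * (r + 1) ^ (k - 1) := by
        by_cases hreq : r = s
        · have h1 : s ^ k = s ^ (k - 1) * s := by
            conv_lhs => rw [show k = (k - 1) + 1 by omega]
            rw [pow_succ]
          have h2 : s ^ (k - 1) < (s + 1) ^ (k - 1) :=
            Nat.pow_lt_pow_left (by omega) (by omega)
          calc s ^ k = s ^ (k - 1) * s := h1
            _ < (s + 1) ^ (k - 1) * s := by
                exact Nat.mul_lt_mul_of_lt_of_le h2 le_rfl (by omega)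
            _ ≤ (s + 1) ^ (k - 1) * M := Nat.mul_le_mul_left _ hSM
            _ = M * (s + 1) ^ (k - 1) := by ring
            _ = M * (r + 1) ^ (k - 1) := by rw [hreq]
        · by_contra hcon
          push_neg at hcon
          have : r + 1 ≤ r := by
            conv_rhs => rw [hr]
            apply Finset.le_max'
            rw [Finset.mem_filter, Finset.mem_range]
            exact ⟨by omega, hcon⟩
          omega
      -- get a good T and a light X inside it
      obtain ⟨T, hTmem, hTW⟩ := exists_good_T k q hk 𝒜 hcards S r (by omega) hrs
        (by rw [← hMdef]; exact hMr)
      rw [Finset.mem_powersetCard] at hTmem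
      obtain ⟨hTS, hTcard⟩ := hTmem
      obtain ⟨X, hXT, hXlight, hXW⟩ := exists_light k hk 𝒜 T.card T le_rfl
      set d := X.card with hd
      have h2d : r ≤ 2 * d := by omega
      have hd1 : 1 ≤ d := by omega
      have hXS : X ⊆ S := hXT.trans hTS
      have hds : d ≤ s := by
        rw [hd, hs]; exact Finset.card_le_card hXS
      set S' := S \ X with hS'
      have hS'card : S'.card = s - d := by
        rw [hS', Finset.card_sdiff_of_subset hXS, ← hs, ← hd]
      have hS'n : S'.card ≤ n := by
        rw [hS'card]; omega
      have hS'M : S'.card ≤ M := by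
        rw [hS'card]; omega
      obtain ⟨t', f', ht'Phi, ht'lt, ht'cls⟩ := ih S' hS'n hS'M
      refine ⟨t' + 1, fun v => if v ∈ X then 0 else f' v + 1, ?_, ?_, ?_⟩
      · rw [hS'card] at ht'Phi
        have hker := Kernel.kernel (M := M) (σ := σc) hk hσk hbase hSM hd1 hds h2d (by omega) hrmax
        push_cast
        linarith
      · intro v hv
        by_cases hvX : v ∈ X
        · simp [hvX]
        · have : v ∈ S' := by rw [hS', Finset.mem_sdiff]; exact ⟨hv, hvX⟩
          simp only [hvX, if_false]
          have := ht'lt v this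
          omega
      · intro A hA c
        match c with
        | 0 =>
          have hsub : (A ∩ S).filter (fun v => (if v ∈ X then 0 else f' v + 1) = 0) ⊆ A ∩ X := by
            intro v hv
            rw [Finset.mem_filter, Finset.mem_inter] at hv
            obtain ⟨⟨hvA, hvS⟩, hvc⟩ := hv
            by_cases hvX : v ∈ X
            · exact Finset.mem_inter.mpr ⟨hvA, hvX⟩
            · simp [hvX] at hvc
          exact le_trans (Finset.card_le_card hsub) (hXlight A hA)
        | c' + 1 =>
          have hsub : (A ∩ S).filter (fun v => (if v ∈ X then 0 else f' v + 1) = c' + 1)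
              ⊆ (A ∩ S').filter (fun v => f' v = c') := by
            intro v hv
            rw [Finset.mem_filter, Finset.mem_inter] at hv
            obtain ⟨⟨hvA, hvS⟩, hvc⟩ := hv
            by_cases hvX : v ∈ X
            · simp [hvX] at hvc
            · simp only [hvX, if_false] at hvc
              rw [Finset.mem_filter, Finset.mem_inter, hS', Finset.mem_sdiff]
              exact ⟨⟨hvA, hvS, hvX⟩, by omega⟩
          exact le_trans (Finset.card_le_card hsub) (ht'cls A hA c')

lemma pow_rpow_eq {a : ℝ} (ha : 0 ≤ a) {k : ℕ} (hk : k ≠ 0) :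
    (a ^ (k : ℕ)) ^ ((1 : ℝ) / k) = a := by
  have hkR : (k : ℝ) ≠ 0 := by exact_mod_cast hk
  rw [← Real.rpow_natCast a k, ← Real.rpow_mul ha, mul_one_div, div_self hkR, Real.rpow_one]

lemma final_bound (k q e M σc cc : ℕ) (hk : 2 ≤ k) (hq : k ≤ q) (he : 1 ≤ e)
    (hMdef : M = 2 * k ^ k * e * q ^ k) (hσdef : σc = 2 * k * cc)
    (hM1 : 1 ≤ M) (hcc1 : 1 ≤ cc) (hcck : M ≤ cc ^ k)
    (hccup : (cc : ℝ) ≤ 2 * (M : ℝ) ^ ((1 : ℝ) / k)) :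
    (σc : ℝ) + 2 + Bc k M σc * (σc : ℝ) ^ (-gam k)
      ≤ 54 * (k : ℝ) ^ 3 * (e : ℝ) ^ ((1 : ℝ) / k) * (q : ℝ) := by
  have hγ0 : 0 < gam k := gam_pos hk
  have hγ1 : gam k ≤ 1 := gam_le_one hk
  set γ := gam k with hγdef
  have hkR : (2 : ℝ) ≤ (k : ℝ) := by exact_mod_cast hk
  have hk0 : (k : ℝ) ≠ 0 := by positivity
  have hM0 : (0 : ℝ) < (M : ℝ) := by exact_mod_cast hM1
  have hMik0 : (0 : ℝ) < (M : ℝ) ^ ((1 : ℝ) / k) := Real.rpow_pos_of_pos hM0 _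
  have hMik1 : (1 : ℝ) ≤ (M : ℝ) ^ ((1 : ℝ) / k) := by
    calc (1 : ℝ) = (1 : ℝ) ^ ((1 : ℝ) / k) := (Real.one_rpow _).symm
      _ ≤ (M : ℝ) ^ ((1 : ℝ) / k) := by
          apply Real.rpow_le_rpow zero_le_one (by exact_mod_cast hM1) (by positivity)
  have hσR : (σc : ℝ) = 2 * (k : ℝ) * (cc : ℝ) := by rw [hσdef]; push_cast; ring
  have hcc0 : (0 : ℝ) < (cc : ℝ) := by exact_mod_cast hcc1
  have hσ0 : (0 : ℝ) < (σc : ℝ) := by rw [hσR]; positivity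
  have hσup : (σc : ℝ) ≤ 4 * (k : ℝ) * (M : ℝ) ^ ((1 : ℝ) / k) := by
    rw [hσR]
    nlinarith [hccup]
  have hcclow : (M : ℝ) ^ ((1 : ℝ) / k) ≤ (cc : ℝ) := by
    calc (M : ℝ) ^ ((1 : ℝ) / k) ≤ ((cc : ℝ) ^ (k : ℕ)) ^ ((1 : ℝ) / k) := by
          apply Real.rpow_le_rpow hM0.le (by exact_mod_cast hcck) (by positivity)
      _ = (cc : ℝ) := pow_rpow_eq hcc0.le (by omega)
  have hσlow : (M : ℝ) ^ ((1 : ℝ) / k) ≤ (σc : ℝ) := by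
    rw [hσR]; nlinarith [hcclow, hcc0]
  -- term computations
  have hterm3 : (σc : ℝ) ^ γ * (σc : ℝ) ^ (-γ) = 1 := by
    rw [← Real.rpow_add hσ0, add_neg_cancel, Real.rpow_zero]
  have h2σ0 : (0 : ℝ) < 2 * (σc : ℝ) := by linarith
  have hterm2 : (2 * (σc : ℝ)) ^ (1 + γ) * (σc : ℝ) ^ (-γ) ≤ 4 * (σc : ℝ) := by
    have e1 : (2 * (σc : ℝ)) ^ (1 + γ) = (2 : ℝ) ^ (1 + γ) * ((σc : ℝ) * (σc : ℝ) ^ γ) := by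
      rw [Real.mul_rpow (by norm_num) hσ0.le, Real.rpow_add hσ0, Real.rpow_one]
    have e2 : (2 : ℝ) ^ (1 + γ) ≤ 4 := by
      calc (2 : ℝ) ^ (1 + γ) ≤ (2 : ℝ) ^ ((2 : ℕ) : ℝ) := by
            apply Real.rpow_le_rpow_of_exponent_le one_le_two
            push_cast; linarith
        _ = 4 := by rw [Real.rpow_natCast]; norm_num
    have e3 : (0 : ℝ) < (2 : ℝ) ^ (1 + γ) := Real.rpow_pos_of_pos (by norm_num) _
    calc (2 * (σc : ℝ)) ^ (1 + γ) * (σc : ℝ) ^ (-γ)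
        = (2 : ℝ) ^ (1 + γ) * (σc : ℝ) * ((σc : ℝ) ^ γ * (σc : ℝ) ^ (-γ)) := by
          rw [e1]; ring
      _ = (2 : ℝ) ^ (1 + γ) * (σc : ℝ) := by rw [hterm3, mul_one]
      _ ≤ 4 * (σc : ℝ) := by nlinarith
  have hterm1 : (M : ℝ) ^ γ * (σc : ℝ) ^ (-γ) ≤ (M : ℝ) ^ ((1 : ℝ) / k) := by
    have e1 : (σc : ℝ) ^ (-γ) ≤ ((M : ℝ) ^ ((1 : ℝ) / k)) ^ (-γ) :=
      rpow_neg_antitone hMik0 hσlow hγ0.le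
    have e2 : ((M : ℝ) ^ ((1 : ℝ) / k)) ^ (-γ) = (M : ℝ) ^ (((1 : ℝ) / k) * (-γ)) := by
      rw [← Real.rpow_mul hM0.le]
    have hexp : γ + ((1 : ℝ) / k) * (-γ) = (1 : ℝ) / k := by
      have h1 := Kernel.k_gam hk
      field_simp
      nlinarith [h1]
    calc (M : ℝ) ^ γ * (σc : ℝ) ^ (-γ)
        ≤ (M : ℝ) ^ γ * (M : ℝ) ^ (((1 : ℝ) / k) * (-γ)) := by
          rw [← e2]
          apply mul_le_mul_of_nonneg_left e1 (Real.rpow_nonneg hM0.le γ)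
      _ = (M : ℝ) ^ (γ + ((1 : ℝ) / k) * (-γ)) := by rw [← Real.rpow_add hM0]
      _ = (M : ℝ) ^ ((1 : ℝ) / k) := by rw [hexp]
  -- assemble B * σ^{-γ}
  have hσnegpos : (0 : ℝ) < (σc : ℝ) ^ (-γ) := Real.rpow_pos_of_pos hσ0 _
  have hBσ : Bc k M σc * (σc : ℝ) ^ (-γ) ≤ 21 * (k : ℝ) ^ 2 * (M : ℝ) ^ ((1 : ℝ) / k) := by
    have expand : Bc k M σc * (σc : ℝ) ^ (-γ)
        = (k : ℝ) * (3 * ((M : ℝ) ^ γ * (σc : ℝ) ^ (-γ))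
          + (2 * (σc : ℝ)) ^ (1 + γ) * (σc : ℝ) ^ (-γ)
          + 2 * ((σc : ℝ) ^ γ * (σc : ℝ) ^ (-γ))) := by
      rw [Bc, ← hγdef]; ring
    rw [expand, hterm3]
    have hσup2 : 4 * (σc : ℝ) ≤ 16 * (k : ℝ) * (M : ℝ) ^ ((1 : ℝ) / k) := by nlinarith
    nlinarith [hterm1, hterm2, hMik1, hkR]
  -- bound M^{1/k}
  have hMsplit : (M : ℝ) ^ ((1 : ℝ) / k) ≤ 2 * (k : ℝ) * (e : ℝ) ^ ((1 : ℝ) / k) * (q : ℝ) := by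
    have hMcast : (M : ℝ) = 2 * (k : ℝ) ^ (k : ℕ) * (e : ℝ) * (q : ℝ) ^ (k : ℕ) := by
      rw [hMdef]; push_cast; ring
    have hq0 : (0 : ℝ) ≤ (q : ℝ) := by positivity
    have he0 : (0 : ℝ) ≤ (e : ℝ) := by positivity
    have hkk0 : (0 : ℝ) ≤ (k : ℝ) ^ (k : ℕ) := by positivity
    have split : (M : ℝ) ^ ((1 : ℝ) / k)
        = (2 : ℝ) ^ ((1 : ℝ) / k) * ((k : ℝ) ^ (k : ℕ)) ^ ((1 : ℝ) / k)
          * (e : ℝ) ^ ((1 : ℝ) / k) * ((q : ℝ) ^ (k : ℕ)) ^ ((1 : ℝ) / k) := by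
      rw [hMcast, Real.mul_rpow (by positivity) (by positivity),
        Real.mul_rpow (by positivity) he0, Real.mul_rpow (by norm_num) hkk0]
    have h2k : (2 : ℝ) ^ ((1 : ℝ) / k) ≤ 2 := by
      calc (2 : ℝ) ^ ((1 : ℝ) / k) ≤ (2 : ℝ) ^ ((1 : ℕ) : ℝ) := by
            apply Real.rpow_le_rpow_of_exponent_le one_le_two
            rw [Nat.cast_one, div_le_one (by positivity)]
            linarith
        _ = 2 := by rw [Real.rpow_natCast]; norm_num
    have hkid : ((k : ℝ) ^ (k : ℕ)) ^ ((1 : ℝ) / k) = (k : ℝ) :=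
      pow_rpow_eq (by positivity) (by omega)
    have hqid : ((q : ℝ) ^ (k : ℕ)) ^ ((1 : ℝ) / k) = (q : ℝ) :=
      pow_rpow_eq hq0 (by omega)
    rw [split, hkid, hqid]
    have hfac : (0 : ℝ) ≤ (k : ℝ) * (e : ℝ) ^ ((1 : ℝ) / k) * (q : ℝ) := by positivity
    calc (2 : ℝ) ^ ((1 : ℝ) / k) * (k : ℝ) * (e : ℝ) ^ ((1 : ℝ) / k) * (q : ℝ)
        = (2 : ℝ) ^ ((1 : ℝ) / k) * ((k : ℝ) * (e : ℝ) ^ ((1 : ℝ) / k) * (q : ℝ)) := by ring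
      _ ≤ 2 * ((k : ℝ) * (e : ℝ) ^ ((1 : ℝ) / k) * (q : ℝ)) :=
          mul_le_mul_of_nonneg_right h2k hfac
      _ = 2 * (k : ℝ) * (e : ℝ) ^ ((1 : ℝ) / k) * (q : ℝ) := by ring
  -- total
  have htotal : (σc : ℝ) + 2 + Bc k M σc * (σc : ℝ) ^ (-γ)
      ≤ 27 * (k : ℝ) ^ 2 * (M : ℝ) ^ ((1 : ℝ) / k) := by
    nlinarith [hσup, hBσ, hMik1, hkR]
  calc (σc : ℝ) + 2 + Bc k M σc * (σc : ℝ) ^ (-γ)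
      ≤ 27 * (k : ℝ) ^ 2 * (M : ℝ) ^ ((1 : ℝ) / k) := htotal
    _ ≤ 27 * (k : ℝ) ^ 2 * (2 * (k : ℝ) * (e : ℝ) ^ ((1 : ℝ) / k) * (q : ℝ)) := by
        apply mul_le_mul_of_nonneg_left hMsplit (by positivity)
    _ = 54 * (k : ℝ) ^ 3 * (e : ℝ) ^ ((1 : ℝ) / k) * (q : ℝ) := by ring

end Stmt2Aux

open Stmt2Aux in
theorem stmt2 (k : ℕ) (hk : 2 ≤ k) :
    ∃ C : ℝ, 0 < C ∧
      ∀ (q e : ℕ), k ≤ q → 1 ≤ e →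
      ∀ (V : Type) [DecidableEq V] (𝒜 : Finset (Finset V)),
        IsSystem (k - 1) q 𝒜 → 𝒜.card = e →
        ∃ n : ℕ, (n : ℝ) ≤ C * (e : ℝ) ^ ((1 : ℝ) / k) * q ∧ SysColorable k n 𝒜 := by
  classical
  refine ⟨54 * (k : ℝ) ^ 3, by positivity, ?_⟩
  intro q e hq he V _ 𝒜 hsys hecard
  obtain ⟨hcards0, -⟩ := hsys
  have hcards : ∀ A ∈ 𝒜, A.card = q := hcards0
  set M := 2 * k ^ k * e * q ^ k with hMdef
  have hq1 : 1 ≤ q := by omega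
  have hkk1 : 1 ≤ k ^ k := Nat.one_le_pow _ _ (by omega)
  have hqk1 : 1 ≤ q ^ k := Nat.one_le_pow _ _ (by omega)
  have hM1 : 1 ≤ M := by
    rw [hMdef]
    calc 1 = 2 * 1 * 1 * 1 - 1 := by norm_num
      _ ≤ 2 * k ^ k * e * q ^ k - 1 := by
          apply Nat.sub_le_sub_right
          exact Nat.mul_le_mul (Nat.mul_le_mul (Nat.mul_le_mul_left 2 hkk1) he) hqk1
      _ ≤ 2 * k ^ k * e * q ^ k := Nat.sub_le _ _
  have hMex : M ≤ M ^ k := Nat.le_self_pow (by omega) M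
  set cc := sInf {n : ℕ | M ≤ n ^ k} with hccdef
  have hccmem : M ≤ cc ^ k := Nat.sInf_mem (⟨M, hMex⟩ : {n : ℕ | M ≤ n ^ k}.Nonempty)
  have hcc1 : 1 ≤ cc := by
    by_contra h
    push_neg at h
    interval_cases cc
    rw [zero_pow (by omega : k ≠ 0)] at hccmem
    omega
  have hccmin : (cc - 1) ^ k < M := by
    have hlt : cc - 1 < cc := by omega
    have := Nat.notMem_of_lt_sInf (hccdef ▸ hlt : cc - 1 < sInf {n : ℕ | M ≤ n ^ k})
    simp only [Set.mem_setOf_eq, not_le] at this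
    exact this
  -- real bound on cc
  have hM0R : (0 : ℝ) < (M : ℝ) := by exact_mod_cast hM1
  have hMik1 : (1 : ℝ) ≤ (M : ℝ) ^ ((1 : ℝ) / k) := by
    calc (1 : ℝ) = (1 : ℝ) ^ ((1 : ℝ) / k) := (Real.one_rpow _).symm
      _ ≤ (M : ℝ) ^ ((1 : ℝ) / k) :=
          Real.rpow_le_rpow zero_le_one (by exact_mod_cast hM1) (by positivity)
  have hccupR : (cc : ℝ) ≤ 2 * (M : ℝ) ^ ((1 : ℝ) / k) := by
    have hcast : ((cc - 1 : ℕ) : ℝ) = (cc : ℝ) - 1 := by push_cast [hcc1]; ring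
    have h1 : (((cc - 1 : ℕ) : ℝ)) ^ (k : ℕ) ≤ (M : ℝ) := by
      exact_mod_cast hccmin.le
    have h2 : ((cc - 1 : ℕ) : ℝ) ≤ (M : ℝ) ^ ((1 : ℝ) / k) := by
      calc ((cc - 1 : ℕ) : ℝ)
          = ((((cc - 1 : ℕ) : ℝ)) ^ (k : ℕ)) ^ ((1 : ℝ) / k) :=
            (pow_rpow_eq (by positivity) (by omega : k ≠ 0)).symm
        _ ≤ (M : ℝ) ^ ((1 : ℝ) / k) :=
            Real.rpow_le_rpow (by positivity) h1 (by positivity)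
    rw [hcast] at h2
    linarith
  set σc := 2 * k * cc with hσdef
  have hσk : 2 * k ≤ σc := by
    rw [hσdef]
    exact Nat.le_mul_of_pos_right _ (by omega)
  have hσpow : M * (2 * k) ^ (k - 1) ≤ σc ^ k := by
    have h1 : σc ^ k = (2 * k) ^ k * cc ^ k := by rw [hσdef, mul_pow]
    have h2 : (2 * k) ^ k = (2 * k) ^ (k - 1) * (2 * k) := by
      have hsum : (k - 1) + 1 = k := by omega
      calc (2 * k) ^ k = (2 * k) ^ ((k - 1) + 1) := by rw [hsum]
        _ = (2 * k) ^ (k - 1) * (2 * k) := pow_succ _ _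
    calc M * (2 * k) ^ (k - 1)
        ≤ cc ^ k * ((2 * k) ^ (k - 1) * (2 * k)) :=
          Nat.mul_le_mul hccmem (Nat.le_mul_of_pos_right _ (by omega))
      _ = σc ^ k := by rw [h1, h2]; ring
  -- the vertex set
  set S0 := 𝒜.biUnion id with hS0
  have hsub : ∀ A ∈ 𝒜, A ⊆ S0 := fun A hA => by
    rw [hS0]
    exact Finset.subset_biUnion_of_mem id hA
  have hS0card : S0.card ≤ M := by
    calc S0.card ≤ ∑ A ∈ 𝒜, (id A).card := Finset.card_biUnion_le
      _ = e * q := by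
          have hcong : ∀ A ∈ 𝒜, (id A).card = q := fun A hA => hcards A hA
          rw [Finset.sum_congr rfl hcong, Finset.sum_const, smul_eq_mul, hecard]
      _ ≤ M := by
          rw [hMdef]
          calc e * q ≤ e * q ^ k := Nat.mul_le_mul_left e (Nat.le_self_pow (by omega) q)
            _ ≤ (2 * k ^ k) * (e * q ^ k) := Nat.le_mul_of_pos_left _ (by positivity)
            _ = 2 * k ^ k * e * q ^ k := by ring
  obtain ⟨t, f, htPhi, hflt, hcls⟩ := cover k q M σc hk 𝒜 hcards
    (by rw [hMdef, hecard]) hσk hσpow S0.card S0 le_rfl hS0card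
  have hσ1 : 1 ≤ σc := by omega
  have hn : ((t + 1 : ℕ) : ℝ) ≤ 54 * (k : ℝ) ^ 3 * (e : ℝ) ^ ((1 : ℝ) / k) * q := by
    have h1 := Phi_le (k := k) (M := M) (σc := σc) hσ1 S0.card
    have h2 := final_bound k q e M σc cc hk hq he hMdef hσdef hM1 hcc1 hccmem hccupR
    push_cast
    linarith
  refine ⟨t + 1, hn, ?_⟩
  refine ⟨fun v => if h : v ∈ S0 then ⟨f v, Nat.lt_succ_of_lt (hflt v h)⟩
    else ⟨t, Nat.lt_succ_self t⟩, ?_⟩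
  intro A hA S hSA hScard
  by_contra hcon
  push_neg at hcon
  have hSne : S.Nonempty := Finset.card_pos.mp (by omega)
  obtain ⟨u0, hu0⟩ := hSne
  have hu0S0 : u0 ∈ S0 := hsub A hA (hSA hu0)
  have hval : ∀ v ∈ S, f v = f u0 := by
    intro v hv
    have hvS0 : v ∈ S0 := hsub A hA (hSA hv)
    have hcc := hcon v hv u0 hu0
    simp only [dif_pos hvS0, dif_pos hu0S0, Fin.mk.injEq] at hcc
    exact hcc
  have hSsub : S ⊆ (A ∩ S0).filter (fun v => f v = f u0) := by
    intro v hv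
    rw [Finset.mem_filter, Finset.mem_inter]
    exact ⟨⟨hSA hv, hsub A hA (hSA hv)⟩, hval v hv⟩
  have hcard := Finset.card_le_card hSsub
  have hk1 := hcls A hA (f u0)
  omega
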